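/- (Armijo step-length theorem.) Suppose f : ℝ^N → ℝ is continuously differentiable and its gradient ∇f is Lipschitz continuous with Lipschitz constant ζ > 0. Let c ∈ (0,1), u ∈ ℝ^N, and let p ∈ ℝ^N be a descent direction at u, i.e. ⟨∇f(u), p⟩ < 0. Then the Armijo condition f(u + γp) ≤ f(u) + c·γ·⟨∇f(u), p⟩ is satisfied for all γ ∈ [0, γ_max], where γ_max = 2(c − 1)⟨∇f(u), p⟩ / (ζ‖p‖²). -/

import Mathlib

open RealInnerProductSpace intervalIntegral

/-- Armijo step-length theorem: if `f` is continuously differentiable with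
`ζ`-Lipschitz gradient, `c ∈ (0,1)` and `p` is a descent direction at `u`
(`⟪∇f(u), p⟫ < 0`), then the Armijo condition
`f(u + γp) ≤ f(u) + cγ⟪∇f(u), p⟫` holds for all
`γ ∈ [0, 2(c − 1)⟪∇f(u), p⟫ / (ζ‖p‖²)]`. -/
theorem armijo_step_length {N : ℕ} (f : EuclideanSpace ℝ (Fin N) → ℝ)
    (hf : ContDiff ℝ 1 f) (ζ : ℝ) (hζ : 0 < ζ)
    (hlip : ∀ u w : EuclideanSpace ℝ (Fin N),
      ‖gradient f u - gradient f w‖ ≤ ζ * ‖u - w‖)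
    (c : ℝ) (hc : c ∈ Set.Ioo (0 : ℝ) 1)
    (u p : EuclideanSpace ℝ (Fin N))
    (hp : ⟪gradient f u, p⟫ < 0) :
    ∀ γ ∈ Set.Icc (0 : ℝ) (2 * (c - 1) * ⟪gradient f u, p⟫ / (ζ * ‖p‖ ^ 2)),
      f (u + γ • p) ≤ f u + c * γ * ⟪gradient f u, p⟫ := by
  intro γ hγ
  obtain ⟨hγ0, hγmax⟩ := hγ
  set a : ℝ := ⟪gradient f u, p⟫ with ha
  have hpne : p ≠ 0 := by
    rintro rfl; simp [ha] at hp
  have hpnorm : 0 < ‖p‖ ^ 2 := pow_pos (norm_pos_iff.mpr hpne) 2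
  -- derivative of t ↦ f (u + t • p)
  have hderiv : ∀ t : ℝ, HasDerivAt (fun s : ℝ => f (u + s • p))
      ⟪gradient f (u + t • p), p⟫ t := by
    intro t
    have hline : HasDerivAt (fun s : ℝ => u + s • p) p t := by
      simpa using ((hasDerivAt_id t).smul_const p).const_add u
    have hg : HasGradientAt f (gradient f (u + t • p)) (u + t • p) :=
      (hf.differentiable one_ne_zero (u + t • p)).hasGradientAt
    have hF := (hasGradientAt_iff_hasFDerivAt.mp hg).comp_hasDerivAt t hline
    have hF' : HasDerivAt (fun s : ℝ => f (u + s • p)) 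
        (((InnerProductSpace.toDual ℝ (EuclideanSpace ℝ (Fin N))) (gradient f (u + t • p))) p) t := hF
    simpa using hF'
  -- continuity of the derivative
  have hgradcont : Continuous (gradient f) := by
    have : LipschitzWith ζ.toNNReal (gradient f) := by
      apply LipschitzWith.of_dist_le_mul
      intro x y
      simpa [dist_eq_norm, Real.coe_toNNReal ζ hζ.le] using hlip x y
    exact this.continuous
  have hcont : Continuous (fun t : ℝ => ⟪gradient f (u + t • p), p⟫) := by
    exact (hgradcont.comp (by continuity)).inner continuous_const
  have hInt : IntervalIntegrable (fun t : ℝ => ⟪gradient f (u + t • p), p⟫)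
      MeasureTheory.volume 0 γ := hcont.intervalIntegrable _ _
  have hftc : f (u + γ • p) - f u = ∫ t in (0:ℝ)..γ, ⟪gradient f (u + t • p), p⟫ := by
    have := intervalIntegral.integral_eq_sub_of_hasDerivAt
      (fun t _ => hderiv t) hInt
    simp only [zero_smul, add_zero] at this
    linarith [this]
  -- pointwise bound on [0, γ]
  have hbound : ∀ t ∈ Set.Icc (0:ℝ) γ,
      ⟪gradient f (u + t • p), p⟫ ≤ a + ζ * ‖p‖ ^ 2 * t := by
    intro t ht
    have h1 : ⟪gradient f (u + t • p), p⟫ - a = ⟪gradient f (u + t • p) - gradient f u, p⟫ := by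
      rw [inner_sub_left]
    have h2 : ⟪gradient f (u + t • p) - gradient f u, p⟫ ≤
        ‖gradient f (u + t • p) - gradient f u‖ * ‖p‖ := real_inner_le_norm _ _
    have h3 : ‖gradient f (u + t • p) - gradient f u‖ ≤ ζ * (t * ‖p‖) := by
      have := hlip (u + t • p) u
      simpa [norm_smul, abs_of_nonneg ht.1] using this
    nlinarith [norm_nonneg p, ht.1]
  have hmono : (∫ t in (0:ℝ)..γ, ⟪gradient f (u + t • p), p⟫) ≤
      ∫ t in (0:ℝ)..γ, (a + ζ * ‖p‖ ^ 2 * t) := by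
    apply intervalIntegral.integral_mono_on hγ0 hInt
    · exact ((by fun_prop : Continuous (fun t : ℝ => a + ζ * ‖p‖ ^ 2 * t))).intervalIntegrable _ _
    · exact hbound
  have hval : (∫ t in (0:ℝ)..γ, (a + ζ * ‖p‖ ^ 2 * t)) =
      γ * a + ζ * ‖p‖ ^ 2 * (γ ^ 2 / 2) := by
    rw [intervalIntegral.integral_add intervalIntegrable_const
      (((by fun_prop : Continuous (fun t : ℝ => ζ * ‖p‖ ^ 2 * t))).intervalIntegrable _ _),
      intervalIntegral.integral_const_mul, integral_id, integral_const]
    simp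
    try ring
  -- combine
  have hkey : f (u + γ • p) ≤ f u + γ * a + ζ * ‖p‖ ^ 2 * (γ ^ 2 / 2) := by
    rw [hval] at hmono
    linarith [hftc ▸ hmono]
  -- step-size bound: γ * ζ * ‖p‖^2 / 2 ≤ (c - 1) * a
  have hstep : ζ * ‖p‖ ^ 2 * (γ ^ 2 / 2) ≤ (c - 1) * a * γ := by
    have hd : 0 < ζ * ‖p‖ ^ 2 := by positivity
    rw [le_div_iff₀ hd] at hγmax
    nlinarith [mul_le_mul_of_nonneg_left hγmax hγ0]
  calc f (u + γ • p) ≤ f u + γ * a + ζ * ‖p‖ ^ 2 * (γ ^ 2 / 2) := hkey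
    _ ≤ f u + γ * a + (c - 1) * a * γ := by linarith
    _ = f u + c * γ * a := by ring
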